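/- There exists an absolute constant C > 0 such that for every n ≥ 1, every polynomial p : 𝔽₂ⁿ → 𝔽₂ of degree at most 2, and every k ≥ 1, the k-th Fourier weight of f(x) = (−1)^{p(x)} satisfies ∑_{A ⊆ [n], |A| = k} |f̂(A)| ≤ C · k^{−1/2} · (1 + √2)^k. -/

import Mathlib

/-- The Fourier coefficient `f̂(A) = 2^{-n} ∑_{x ∈ 𝔽₂ⁿ} f(x) (-1)^{x_A}`,
where `x_A = ∑_{i ∈ A} x_i ∈ 𝔽₂`. -/
noncomputable def fCoeff {n : ℕ} (f : (Fin n → ZMod 2) → ℝ) (A : Finset (Fin n)) : ℝ :=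
  (1 / 2 ^ n) * ∑ x : Fin n → ZMod 2, f x * (-1 : ℝ) ^ (∑ i ∈ A, x i).val

/-- `p : 𝔽₂ⁿ → 𝔽₂` is a polynomial of degree at most 2. -/
def IsDegreeLE2 {n : ℕ} (p : (Fin n → ZMod 2) → ZMod 2) : Prop :=
  ∃ (a : Fin n → Fin n → ZMod 2) (b : Fin n → ZMod 2) (c : ZMod 2),
    ∀ x, p x = (∑ i : Fin n, ∑ j : Fin n, if i < j then a i j * x i * x j else 0)
      + (∑ i : Fin n, b i * x i) + c

open Real Finset Nat
set_option maxHeartbeats 1000000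

noncomputable def s2 : ℝ := Real.sqrt 2

lemma s2_sq : s2 ^ 2 = 2 := Real.sq_sqrt (by norm_num)
lemma s2_pos : 0 < s2 := Real.sqrt_pos.2 (by norm_num)
lemma s2_lb : (1.414 : ℝ) ≤ s2 := by nlinarith [s2_sq, s2_pos]
lemma s2_ub : s2 ≤ (1.415 : ℝ) := by nlinarith [s2_sq, s2_pos]

lemma k9le (k : ℕ) : (k:ℝ)^9 ≤ 9^9 * 3^k := by
  induction k with
  | zero => norm_num
  | succ m ih =>
    rcases le_or_gt (m+1) 9 with h | h
    · have h1 : ((m:ℝ)+1) ≤ 9 := by exact_mod_cast h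
      have h2 : ((m:ℝ)+1)^9 ≤ 9^9 := by
        refine pow_le_pow_left₀ (by positivity) h1 9
      have h3 : (1:ℝ) ≤ 3^(m+1) := one_le_pow₀ (by norm_num)
      push_cast
      nlinarith
    · have hm : (9:ℝ) ≤ m := by exact_mod_cast (by omega : 9 ≤ m)
      have h1 : (m:ℝ)+1 ≤ (10/9) * m := by linarith
      have h2 : ((m:ℝ)+1)^9 ≤ ((10/9)*(m:ℝ))^9 :=
        pow_le_pow_left₀ (by positivity) h1 9
      have h3 : ((10/9)*(m:ℝ))^9 = (10/9:ℝ)^9 * (m:ℝ)^9 := by ring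
      have h4 : (10/9:ℝ)^9 * (m:ℝ)^9 ≤ 3 * (9^9 * 3^m) := by
        have : (10/9:ℝ)^9 ≤ 3 := by norm_num
        have hm9 : (0:ℝ) ≤ (m:ℝ)^9 := by positivity
        nlinarith [ih, pow_pos (show (0:ℝ) < 3 by norm_num) m]
      push_cast
      calc ((m:ℝ)+1)^9 ≤ (10/9:ℝ)^9 * (m:ℝ)^9 := by linarith
        _ ≤ 3 * (9^9 * 3^m) := h4
        _ = 9^9 * 3^(m+1) := by ring

lemma sqrtpi_le_stirling (n : ℕ) : Real.sqrt π ≤ Stirling.stirlingSeq (n+1) := by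
  have ht : Filter.Tendsto (Stirling.stirlingSeq ∘ Nat.succ) Filter.atTop (nhds (Real.sqrt π)) := by
    exact (Filter.tendsto_add_atTop_iff_nat 1).2 Stirling.tendsto_stirlingSeq_sqrt_pi
  exact Stirling.stirlingSeq'_antitone.le_of_tendsto ht n

lemma stirling_le (n : ℕ) : Stirling.stirlingSeq (n+1) ≤ Real.exp 1 / s2 := by
  have := Stirling.stirlingSeq'_antitone (Nat.zero_le n)
  simpa [Stirling.stirlingSeq_one, s2] using this

lemma fact_lower (n : ℕ) (hn : 1 ≤ n) :
    Real.sqrt π * (Real.sqrt (2*n) * ((n:ℝ)/Real.exp 1)^n) ≤ n ! := by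
  obtain ⟨m, rfl⟩ := Nat.exists_eq_add_of_le hn
  have h := sqrtpi_le_stirling m
  rw [Stirling.stirlingSeq] at h
  have hD : 0 < Real.sqrt (2*((1+m:ℕ):ℝ)) * (((1+m:ℕ):ℝ)/Real.exp 1)^(1+m) := by
    have h1 : (0:ℝ) < ((1+m:ℕ):ℝ) := by positivity
    positivity
  have h2 := (le_div_iff₀ hD).mp (by convert h using 3; rfl; all_goals (push_cast; ring_nf))
  calc Real.sqrt π * (Real.sqrt (2*((1+m:ℕ):ℝ)) * (((1+m:ℕ):ℝ)/Real.exp 1)^(1+m)) ≤ ((m+1)! : ℝ) := h2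
    _ ≤ _ := by rw [Nat.add_comm 1 m]

lemma fact_upper (n : ℕ) (hn : 1 ≤ n) :
    (n ! : ℝ) ≤ (Real.exp 1 / s2) * (Real.sqrt (2*n) * ((n:ℝ)/Real.exp 1)^n) := by
  obtain ⟨m, rfl⟩ := Nat.exists_eq_add_of_le hn
  have h := stirling_le m
  rw [Stirling.stirlingSeq] at h
  have hD : 0 < Real.sqrt (2*((1+m:ℕ):ℝ)) * (((1+m:ℕ):ℝ)/Real.exp 1)^(1+m) := by
    have h1 : (0:ℝ) < ((1+m:ℕ):ℝ) := by positivity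
    positivity
  have h2 := (div_le_iff₀ hD).mp (by convert h using 3; rfl; all_goals (push_cast; ring_nf))
  calc ((1+m:ℕ)! : ℝ) = ((m+1)! : ℝ) := by rw [Nat.add_comm 1 m]
    _ ≤ _ := h2

noncomputable def qq : ℝ := s2⁻¹
noncomputable def pp : ℝ := 1 - qq

lemma qq_pos : 0 < qq := inv_pos.2 s2_pos
lemma qq_lt_one : qq < 1 := by
  rw [qq, inv_lt_one_iff₀]; right; nlinarith [s2_lb]
lemma pp_pos : 0 < pp := by simp [pp]; exact qq_lt_one
lemma ppqq : pp + qq = 1 := by simp [pp]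

lemma amgm (k m : ℕ) (hk : 1 ≤ k) (hm : 1 ≤ m) :
    (((k+m:ℕ):ℝ)*pp/k)^k * ((((k+m:ℕ)):ℝ)*qq/m)^m ≤ 1 := by
  have hkR : (0:ℝ) < k := by exact_mod_cast hk
  have hmR : (0:ℝ) < m := by exact_mod_cast hm
  set d : ℝ := ((k+m:ℕ):ℝ) with hd
  have hdR : (0:ℝ) < d := by rw [hd]; push_cast; linarith
  set p₁ : ℝ := d*pp/k with hp₁
  set p₂ : ℝ := d*qq/m with hp₂
  have hp₁0 : 0 ≤ p₁ := by
    have := pp_pos; positivity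
  have hp₂0 : 0 ≤ p₂ := by
    have := qq_pos; positivity
  have hw : (k:ℝ)/d + (m:ℝ)/d = 1 := by
    field_simp [hd]
    rw [hd]; push_cast; ring
  have h := Real.geom_mean_le_arith_mean2_weighted
    (by positivity : (0:ℝ) ≤ (k:ℝ)/d) (by positivity : (0:ℝ) ≤ (m:ℝ)/d) hp₁0 hp₂0 hw
  have harith : (k:ℝ)/d * p₁ + (m:ℝ)/d * p₂ = 1 := by
    rw [hp₁, hp₂]
    field_simp
    linear_combination ppqq
  rw [harith] at h
  have hbase : 0 ≤ p₁ ^ ((k:ℝ)/d) * p₂ ^ ((m:ℝ)/d) := by positivity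
  have hpow := Real.rpow_le_one hbase h (le_of_lt hdR)
  have hexp : (p₁ ^ ((k:ℝ)/d) * p₂ ^ ((m:ℝ)/d)) ^ (d:ℝ) = p₁^k * p₂^m := by
    rw [Real.mul_rpow (by positivity) (by positivity),
        ← Real.rpow_natCast p₁ k, ← Real.rpow_natCast p₂ m,
        ← Real.rpow_mul hp₁0, ← Real.rpow_mul hp₂0]
    congr 1
    · congr 1
      field_simp
    · congr 1
      field_simp
  rw [hexp] at hpow
  exact hpow

lemma pmf_bound (k m : ℕ) (hk : 1 ≤ k) (hkm : k ≤ m) :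
    (((k+m).choose k : ℕ):ℝ) * pp^k * qq^m * Real.sqrt k ≤ 1 := by
  have hm : 1 ≤ m := le_trans hk hkm
  have hkR : (0:ℝ) < k := by exact_mod_cast hk
  have hmR : (0:ℝ) < m := by exact_mod_cast hm
  have hkmR : (k:ℝ) ≤ m := by exact_mod_cast hkm
  set e1 : ℝ := Real.exp 1 with he1
  have he1pos : 0 < e1 := Real.exp_pos 1
  set d : ℝ := ((k+m:ℕ):ℝ) with hd
  have hdR : (0:ℝ) < d := by rw [hd]; push_cast; linarith
  -- factorial identity
  have hcn : (k+m).choose k * k ! * m ! = (k+m)! := by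
    have h0 := Nat.choose_mul_factorial_mul_factorial (Nat.le_add_right k m)
    have h1 : k + m - k = m := by omega
    rwa [h1] at h0
  have hc : (((k+m).choose k : ℕ):ℝ) * ((k ! : ℕ):ℝ) * ((m ! : ℕ):ℝ) = (((k+m)! : ℕ):ℝ) := by
    exact_mod_cast hcn
  set X : ℝ := pp^k * qq^m * Real.sqrt k with hX
  have hpp := pp_pos
  have hqq := qq_pos
  have hX0 : 0 ≤ X := by positivity
  have hdkm : d = (k:ℝ) + (m:ℝ) := by rw [hd]; push_cast; ring
  set F : ℝ := ((k:ℝ)/e1)^k * ((m:ℝ)/e1)^m with hF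
  have hFpos : 0 < F := by positivity
  have h1 : (((k+m)! : ℕ):ℝ) ≤ (e1/s2) * (Real.sqrt (2*d) * (d/e1)^(k+m)) :=
    fact_upper (k+m) (by omega)
  have h2 : Real.sqrt π * (Real.sqrt (2*(k:ℝ)) * ((k:ℝ)/e1)^k) ≤ ((k ! : ℕ):ℝ) := fact_lower k hk
  have h3 : Real.sqrt π * (Real.sqrt (2*(m:ℝ)) * ((m:ℝ)/e1)^m) ≤ ((m ! : ℕ):ℝ) := fact_lower m hm
  have hA := amgm k m hk hm
  have he1ub : e1 ≤ 2.7182818286 := le_of_lt Real.exp_one_lt_d9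
  have hπ : (3.141592:ℝ) ≤ π := le_of_lt Real.pi_gt_d6
  have he1sq : e1^2 ≤ (7.4:ℝ) := by nlinarith [he1pos]
  have hpisq : (9.8:ℝ) ≤ π^2 := by nlinarith [Real.pi_pos]
  have hB : (e1/s2) * Real.sqrt (2*d) * Real.sqrt k ≤ π * (Real.sqrt (2*(k:ℝ)) * Real.sqrt (2*(m:ℝ))) := by
    have hsq : ((e1/s2) * Real.sqrt (2*d) * Real.sqrt k)^2 ≤ (π * (Real.sqrt (2*(k:ℝ)) * Real.sqrt (2*(m:ℝ))))^2 := by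
      have e1' : Real.sqrt (2*d)^2 = 2*d := Real.sq_sqrt (by positivity)
      have e2' : Real.sqrt (k:ℝ)^2 = (k:ℝ) := Real.sq_sqrt (by positivity)
      have e3' : Real.sqrt (2*(k:ℝ))^2 = 2*(k:ℝ) := Real.sq_sqrt (by positivity)
      have e4' : Real.sqrt (2*(m:ℝ))^2 = 2*(m:ℝ) := Real.sq_sqrt (by positivity)
      have hs2 := s2_sq
      have hexp1 : (0:ℝ) < e1 := he1pos
      calc ((e1/s2) * Real.sqrt (2*d) * Real.sqrt k)^2
          = (e1^2/s2^2) * (Real.sqrt (2*d)^2) * (Real.sqrt (k:ℝ)^2) := by ring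
        _ = (e1^2/2) * (2*d) * k := by rw [e1', e2', hs2]
        _ ≤ π^2 * ((2*(k:ℝ)) * (2*(m:ℝ))) := by
            rw [hdkm]; nlinarith [he1sq, hpisq, mul_pos hkR hmR, mul_le_mul_of_nonneg_right hkmR (le_of_lt hkR)]
        _ = (π * (Real.sqrt (2*(k:ℝ)) * Real.sqrt (2*(m:ℝ))))^2 := by rw [mul_pow, mul_pow, e3', e4']
    exact le_of_pow_le_pow_left₀ two_ne_zero (by positivity) hsq
  have hid : ((e1/s2) * (Real.sqrt (2*d) * (d/e1)^(k+m))) * X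
      = ((e1/s2) * Real.sqrt (2*d) * Real.sqrt k) * (F * ((d*pp/(k:ℝ))^k * (d*qq/(m:ℝ))^m)) := by
    have ek : (d/e1)^k * pp^k = ((k:ℝ)/e1)^k * (d*pp/(k:ℝ))^k := by
      rw [← mul_pow, ← mul_pow]
      congr 1
      field_simp
    have em : (d/e1)^m * qq^m = ((m:ℝ)/e1)^m * (d*qq/(m:ℝ))^m := by
      rw [← mul_pow, ← mul_pow]
      congr 1
      field_simp
    calc ((e1/s2) * (Real.sqrt (2*d) * (d/e1)^(k+m))) * X
        = ((e1/s2) * Real.sqrt (2*d) * Real.sqrt k) * (((d/e1)^k * pp^k) * ((d/e1)^m * qq^m)) := by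
          rw [hX, pow_add]; ring
      _ = ((e1/s2) * Real.sqrt (2*d) * Real.sqrt k) * ((((k:ℝ)/e1)^k * (d*pp/(k:ℝ))^k) * (((m:ℝ)/e1)^m * (d*qq/(m:ℝ))^m)) := by
          rw [ek, em]
      _ = _ := by rw [hF]; ring
  have hKM : (((k+m)! : ℕ):ℝ) * X ≤ ((k ! : ℕ):ℝ) * ((m ! : ℕ):ℝ) := by
    calc (((k+m)! : ℕ):ℝ) * X ≤ ((e1/s2) * (Real.sqrt (2*d) * (d/e1)^(k+m))) * X :=
          mul_le_mul_of_nonneg_right h1 hX0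
      _ = ((e1/s2) * Real.sqrt (2*d) * Real.sqrt k) * (F * ((d*pp/(k:ℝ))^k * (d*qq/(m:ℝ))^m)) := hid
      _ ≤ (π * (Real.sqrt (2*(k:ℝ)) * Real.sqrt (2*(m:ℝ)))) * (F * 1) := by
          refine mul_le_mul hB (mul_le_mul_of_nonneg_left ?_ (le_of_lt hFpos)) (by positivity) (by positivity)
          exact hA
      _ = (Real.sqrt π * (Real.sqrt (2*(k:ℝ)) * ((k:ℝ)/e1)^k)) * (Real.sqrt π * (Real.sqrt (2*(m:ℝ)) * ((m:ℝ)/e1)^m)) := by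
          have hpi2 : Real.sqrt π * Real.sqrt π = π := Real.mul_self_sqrt (le_of_lt Real.pi_pos)
          conv_lhs => rw [← hpi2]
          rw [hF]; ring
      _ ≤ ((k ! : ℕ):ℝ) * ((m ! : ℕ):ℝ) := mul_le_mul h2 h3 (by positivity) (by positivity)
  have hpos : (0:ℝ) < ((k ! : ℕ):ℝ) * ((m ! : ℕ):ℝ) := by positivity
  have hfin : (((k+m).choose k : ℕ):ℝ) * X * (((k ! : ℕ):ℝ) * ((m ! : ℕ):ℝ)) ≤ 1 * (((k ! : ℕ):ℝ) * ((m ! : ℕ):ℝ)) := by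
    calc (((k+m).choose k : ℕ):ℝ) * X * (((k ! : ℕ):ℝ) * ((m ! : ℕ):ℝ)) = (((k+m)! : ℕ):ℝ) * X := by
          rw [← hc]; ring
      _ ≤ ((k ! : ℕ):ℝ) * ((m ! : ℕ):ℝ) := hKM
      _ = 1 * (((k ! : ℕ):ℝ) * ((m ! : ℕ):ℝ)) := by ring
  have hfin2 := le_of_mul_le_mul_right hfin hpos
  calc (((k+m).choose k : ℕ):ℝ) * pp^k * qq^m * Real.sqrt k = (((k+m).choose k : ℕ):ℝ) * X := by
        rw [hX]; ring
    _ ≤ 1 := hfin2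

lemma sum_choose_le_two_pow (d k : ℕ) : ∑ j ∈ Finset.range (k+1), d.choose j ≤ 2^d := by
  rcases le_or_gt k d with h | h
  · calc ∑ j ∈ Finset.range (k+1), d.choose j ≤ ∑ j ∈ Finset.range (d+1), d.choose j :=
        Finset.sum_le_sum_of_subset (Finset.range_subset_range.2 (by omega))
      _ = 2^d := Nat.sum_range_choose d
  · have he : ∑ j ∈ Finset.range (k+1), d.choose j = ∑ j ∈ Finset.range (d+1), d.choose j := by
      refine (Finset.sum_subset (Finset.range_subset_range.2 (by omega)) ?_).symm
      intro x hx hnx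
      simp only [Finset.mem_range] at hx hnx
      exact Nat.choose_eq_zero_of_lt (by omega)
    rw [he]
    exact le_of_eq (Nat.sum_range_choose d)

lemma geom_step (d k : ℕ) (h : 20*k < 9*d) :
    ∀ i, i ≤ k → ((d.choose (k-i) : ℕ):ℝ) ≤ (9/11)^i * ((d.choose k : ℕ):ℝ) := by
  have hkd : k < d := by omega
  intro i
  induction i with
  | zero => simp
  | succ j ih =>
    intro hjk
    have hj := ih (by omega)
    have h2 : k-j-1+1 = k-j := by omega
    have idn : d.choose (k-j) * (k-j) = d.choose (k-j-1) * (d-(k-j-1)) := by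
      have := Nat.choose_succ_right_eq d (k-j-1)
      rwa [h2] at this
    have hcoef : 11 * (k-j) ≤ 9 * (d-(k-j-1)) := by omega
    have hstep : 11 * d.choose (k-j-1) ≤ 9 * d.choose (k-j) := by
      have hpos : 0 < d-(k-j-1) := by omega
      refine Nat.le_of_mul_le_mul_right ?_ hpos
      calc 11 * d.choose (k-j-1) * (d-(k-j-1)) = 11 * (d.choose (k-j) * (k-j)) := by
            rw [mul_assoc, ← idn]
        _ = d.choose (k-j) * (11 * (k-j)) := by ring
        _ ≤ d.choose (k-j) * (9 * (d-(k-j-1))) := Nat.mul_le_mul_left _ hcoef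
        _ = 9 * d.choose (k-j) * (d-(k-j-1)) := by ring
    have hstepR : ((d.choose (k-(j+1)) : ℕ):ℝ) ≤ (9/11) * ((d.choose (k-j) : ℕ):ℝ) := by
      have : (11:ℝ) * ((d.choose (k-j-1) : ℕ):ℝ) ≤ 9 * ((d.choose (k-j) : ℕ):ℝ) := by
        exact_mod_cast hstep
      have e : k-(j+1) = k-j-1 := by omega
      rw [e]; linarith
    calc ((d.choose (k-(j+1)) : ℕ):ℝ) ≤ (9/11) * ((d.choose (k-j) : ℕ):ℝ) := hstepR
      _ ≤ (9/11) * ((9/11)^j * ((d.choose k : ℕ):ℝ)) := by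
          refine mul_le_mul_of_nonneg_left hj (by norm_num)
      _ = (9/11)^(j+1) * ((d.choose k : ℕ):ℝ) := by ring

lemma sum_choose_geom (d k : ℕ) (h : 20*k < 9*d) :
    (∑ j ∈ Finset.range (k+1), ((d.choose j : ℕ):ℝ)) ≤ (11/2) * ((d.choose k : ℕ):ℝ) := by
  have h1 : ∑ j ∈ Finset.range (k+1), ((d.choose j : ℕ):ℝ)
      = ∑ i ∈ Finset.range (k+1), ((d.choose (k-i) : ℕ):ℝ) := by
    refine (Finset.sum_range_reflect (fun j => ((d.choose j : ℕ):ℝ)) (k+1)).symm.trans ?_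
    refine Finset.sum_congr rfl ?_
    intro i hi
    norm_num
  rw [h1]
  calc ∑ i ∈ Finset.range (k+1), ((d.choose (k-i) : ℕ):ℝ)
      ≤ ∑ i ∈ Finset.range (k+1), (9/11:ℝ)^i * ((d.choose k : ℕ):ℝ) := by
        refine Finset.sum_le_sum ?_
        intro i hi
        simp only [Finset.mem_range] at hi
        exact geom_step d k h i (by omega)
    _ = (∑ i ∈ Finset.range (k+1), (9/11:ℝ)^i) * ((d.choose k : ℕ):ℝ) := by
        rw [Finset.sum_mul]
    _ ≤ (11/2) * ((d.choose k : ℕ):ℝ) := by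
        refine mul_le_mul_of_nonneg_right ?_ (Nat.cast_nonneg _)
        rw [geom_sum_eq (by norm_num : (9/11:ℝ) ≠ 1)]
        have hp : (0:ℝ) ≤ (9/11:ℝ)^(k+1) := by positivity
        rw [div_le_iff_of_neg (by norm_num : (9/11:ℝ) - 1 < 0)]
        nlinarith [hp]

lemma pow_two_le_pow_two_of_le {a b : ℕ} (h : a ≤ b) : (2:ℝ)^a ≤ (2:ℝ)^b :=
  pow_le_pow_right₀ (by norm_num) h

lemma keybound (d k : ℕ) (hk : 1 ≤ k) :
    (∑ j ∈ Finset.range (k+1), ((d.choose j : ℕ):ℝ)) * Real.sqrt k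
      ≤ 100 * s2^d * (1+s2)^k := by
  have hs2 := s2_sq
  have hs2p := s2_pos
  have hs2l := s2_lb
  have hsk : (0:ℝ) ≤ Real.sqrt k := Real.sqrt_nonneg _
  rcases le_or_gt (9*d) (20*k) with hI | hII
  · -- Region I : trivial 2^d bound
    have hSig : (∑ j ∈ Finset.range (k+1), ((d.choose j : ℕ):ℝ)) ≤ 2^d := by
      have := sum_choose_le_two_pow d k
      calc (∑ j ∈ Finset.range (k+1), ((d.choose j : ℕ):ℝ))
          = ((∑ j ∈ Finset.range (k+1), d.choose j : ℕ):ℝ) := by push_cast; ring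
        _ ≤ ((2^d : ℕ):ℝ) := by exact_mod_cast this
        _ = 2^d := by push_cast; ring
    have key : s2^d * Real.sqrt k ≤ 100 * (1+s2)^k := by
      have h18 : (s2^d * Real.sqrt k)^18 ≤ (100 * (1+s2)^k)^18 := by
        have eA : (s2^d * Real.sqrt k)^18 = (2:ℝ)^(9*d) * (k:ℝ)^9 := by
          have e1 : (s2^d)^18 = (2:ℝ)^(9*d) := by
            rw [← pow_mul, show d*18 = 2*(9*d) by ring, pow_mul, hs2]
          have e2 : (Real.sqrt k)^18 = (k:ℝ)^9 := by
            rw [show (18:ℕ) = 2*9 by ring, pow_mul, Real.sq_sqrt (Nat.cast_nonneg k)]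
          rw [mul_pow, e1, e2]
        have eB : (100 * (1+s2)^k)^18 = (100:ℝ)^18 * ((3+2*s2)^9)^k := by
          have e3 : ((1+s2)^k)^18 = ((3+2*s2)^9)^k := by
            rw [← pow_mul, show k*18 = (2*9)*k by ring, pow_mul, pow_mul]
            congr 2
            nlinarith [hs2]
          rw [mul_pow, e3]
        rw [eA, eB]
        have c1 : (2:ℝ)^(9*d) ≤ (2:ℝ)^(20*k) := pow_two_le_pow_two_of_le hI
        have c2 : (k:ℝ)^9 ≤ 9^9 * 3^k := k9le k
        have c3 : (3:ℝ)*2^20 ≤ (3+2*s2)^9 := by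
          calc (3:ℝ)*2^20 ≤ (5.828:ℝ)^9 := by norm_num
            _ ≤ (3+2*s2)^9 := by
                refine pow_le_pow_left₀ (by norm_num) (by nlinarith [hs2l]) 9
        calc (2:ℝ)^(9*d) * (k:ℝ)^9 ≤ (2:ℝ)^(20*k) * (9^9 * 3^k) := by
              refine mul_le_mul c1 c2 (by positivity) (by positivity)
          _ = 9^9 * (3*2^20)^k := by rw [mul_pow, pow_mul]; ring
          _ ≤ (100:ℝ)^18 * ((3+2*s2)^9)^k := by
              refine mul_le_mul (by norm_num) (pow_le_pow_left₀ (by positivity) c3 k) (by positivity) (by positivity)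
      exact le_of_pow_le_pow_left₀ (by norm_num) (by positivity) h18
    calc (∑ j ∈ Finset.range (k+1), ((d.choose j : ℕ):ℝ)) * Real.sqrt k
        ≤ 2^d * Real.sqrt k := mul_le_mul_of_nonneg_right hSig hsk
      _ = s2^d * (s2^d * Real.sqrt k) := by
          rw [← mul_assoc, ← mul_pow]
          congr 2
          nlinarith [hs2]
      _ ≤ s2^d * (100 * (1+s2)^k) := by
          refine mul_le_mul_of_nonneg_left key (by positivity)
      _ = 100 * s2^d * (1+s2)^k := by ring
  · -- Region II
    have h2k : 2*k ≤ d := by omega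
    set m := d - k with hm
    have hdm : d = k + m := by omega
    have hkm : k ≤ m := by omega
    have hpmf := pmf_bound k m hk hkm
    have hpp := pp_pos
    have hqq := qq_pos
    have hppe : pp * (2+s2) = 1 := by
      rw [pp, qq]
      field_simp
      nlinarith [hs2]
    have hqqe : qq * s2 = 1 := by
      rw [qq]
      field_simp
    have h2s2 : (2+s2:ℝ) = s2*(1+s2) := by nlinarith [hs2]
    have hbin : ((d.choose k : ℕ):ℝ) * Real.sqrt k ≤ s2^d * (1+s2)^k := by
      have hmul : (((k+m).choose k : ℕ):ℝ) * pp^k * qq^m * Real.sqrt k * ((2+s2)^k * s2^m)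
          ≤ 1 * ((2+s2)^k * s2^m) := by
        refine mul_le_mul_of_nonneg_right hpmf (by positivity)
      have hL : (((k+m).choose k : ℕ):ℝ) * pp^k * qq^m * Real.sqrt k * ((2+s2)^k * s2^m)
          = (((k+m).choose k : ℕ):ℝ) * Real.sqrt k * ((pp*(2+s2))^k * (qq*s2)^m) := by
        rw [mul_pow, mul_pow]; ring
      have hR : (1:ℝ) * ((2+s2)^k * s2^m) = s2^(k+m) * (1+s2)^k := by
        rw [h2s2, mul_pow, pow_add]; ring
      rw [hL, hR, hppe, hqqe] at hmul
      simpa [hdm] using hmul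
    have hgeo := sum_choose_geom d k hII
    calc (∑ j ∈ Finset.range (k+1), ((d.choose j : ℕ):ℝ)) * Real.sqrt k
        ≤ ((11/2) * ((d.choose k : ℕ):ℝ)) * Real.sqrt k := mul_le_mul_of_nonneg_right hgeo hsk
      _ = (11/2) * (((d.choose k : ℕ):ℝ) * Real.sqrt k) := by ring
      _ ≤ (11/2) * (s2^d * (1+s2)^k) := mul_le_mul_of_nonneg_left hbin (by norm_num)
      _ ≤ 100 * s2^d * (1+s2)^k := by
          have : (0:ℝ) ≤ s2^d * (1+s2)^k := by positivity
          nlinarith [this]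

set_option maxHeartbeats 1000000

open Finset


noncomputable def chi (z : ZMod 2) : ℝ := (-1)^z.val

lemma zmod2_cases (a : ZMod 2) : a = 0 ∨ a = 1 := by revert a; decide

lemma chi_zero : chi 0 = 1 := by simp [chi]

lemma chi_add (a b : ZMod 2) : chi (a+b) = chi a * chi b := by
  have hv : ∀ z : ZMod 2, z = 0 ∨ z = 1 := zmod2_cases
  have h2 : ((1:ZMod 2) + 1) = 0 := by decide
  rcases hv a with rfl | rfl <;> rcases hv b with rfl | rfl <;>
    simp [chi, h2] <;> norm_num [ZMod.val_one]

lemma chi_one : chi 1 = -1 := by simp [chi, ZMod.val_one]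

lemma abs_chi (a : ZMod 2) : |chi a| = 1 := by
  rcases zmod2_cases a with rfl | rfl <;> simp [chi]

section dim
variable {n : ℕ}

def dotp (u v : Fin n → ZMod 2) : ZMod 2 := ∑ i, u i * v i

lemma dotp_add_right (u v w : Fin n → ZMod 2) : dotp u (v+w) = dotp u v + dotp u w := by
  simp [dotp, mul_add, Finset.sum_add_distrib]

lemma dotp_add_left (u v w : Fin n → ZMod 2) : dotp (u+v) w = dotp u w + dotp v w := by
  simp [dotp, add_mul, Finset.sum_add_distrib]

lemma dotp_zero_left (w : Fin n → ZMod 2) : dotp 0 w = 0 := by simp [dotp]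

lemma sum_chi_shift (g : (Fin n → ZMod 2) → ℝ) (e : Fin n → ZMod 2) :
    ∑ x : Fin n → ZMod 2, g x = ∑ x : Fin n → ZMod 2, g (e + x) :=
  (Fintype.sum_equiv (Equiv.addLeft e) _ _ (fun _ => rfl)).symm

lemma sum_chi_dotp_ne (u : Fin n → ZMod 2) (hu : u ≠ 0) :
    ∑ x : Fin n → ZMod 2, chi (dotp u x) = 0 := by
  have : ∃ i, u i ≠ 0 := by
    by_contra h
    push_neg at h
    exact hu (funext fun i => h i)
  obtain ⟨i₀, hi₀⟩ := this
  have hu1 : u i₀ = 1 := by rcases zmod2_cases (u i₀) with h | h; exact absurd h hi₀; exact h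
  set e : Fin n → ZMod 2 := Pi.single i₀ 1 with he
  have hde : dotp u e = 1 := by
    rw [dotp]
    rw [Finset.sum_eq_single i₀]
    · rw [he]; simp [hu1]
    · intro j _ hj; rw [he]; simp [Pi.single_apply, hj]
    · intro h; exact absurd (Finset.mem_univ i₀) h
  have h1 : ∑ x : Fin n → ZMod 2, chi (dotp u x)
      = ∑ x : Fin n → ZMod 2, chi (dotp u (e + x)) := sum_chi_shift _ e
  have h2 : ∀ x, chi (dotp u (e + x)) = - chi (dotp u x) := by
    intro x
    rw [show e + x = e + x from rfl, dotp_add_right, chi_add, hde, chi_one]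
    ring
  rw [Finset.sum_congr rfl (fun x _ => h2 x)] at h1
  rw [Finset.sum_neg_distrib] at h1
  linarith

lemma sum_chi_dotp_zero :
    ∑ x : Fin n → ZMod 2, chi (dotp (0 : Fin n → ZMod 2) x) = 2^n := by
  have : ∀ x : Fin n → ZMod 2, chi (dotp 0 x) = 1 := by
    intro x; rw [dotp_zero_left, chi_zero]
  rw [Finset.sum_congr rfl (fun x _ => this x)]
  simp [Finset.card_univ]

end dim

lemma z2 (z : ZMod 2) : z + z = 0 := by
  rcases zmod2_cases z with rfl | rfl <;> decide

section quad
variable {n : ℕ} (a : Fin n → Fin n → ZMod 2) (b : Fin n → ZMod 2) (c₀ : ZMod 2)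

def Amat : Fin n → Fin n → ZMod 2 := fun i j =>
  if i < j then a i j else if j < i then a j i else 0

noncomputable def Mlin : (Fin n → ZMod 2) →ₗ[ZMod 2] (Fin n → ZMod 2) :=
  Matrix.mulVecLin (Matrix.of (Amat a))

lemma Mlin_apply (h : Fin n → ZMod 2) (i : Fin n) :
    Mlin a h i = ∑ j, Amat a i j * h j := by
  simp [Mlin, Matrix.mulVecLin_apply, Matrix.mulVec, dotProduct]

def qf (x : Fin n → ZMod 2) : ZMod 2 :=
  ∑ i, ∑ j, if i < j then a i j * x i * x j else 0

def lf (x : Fin n → ZMod 2) : ZMod 2 := ∑ i, b i * x i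

lemma lf_add (x h : Fin n → ZMod 2) : lf b (x+h) = lf b x + lf b h := by
  simp [lf, mul_add, Finset.sum_add_distrib]

lemma qf_expand (x h : Fin n → ZMod 2) :
    qf a (x+h) = qf a x + qf a h + dotp (Mlin a h) x := by
  have hsplit : ∀ i j : Fin n,
      (if i < j then a i j * (x+h) i * (x+h) j else 0)
      = (if i < j then a i j * x i * x j else 0)
        + (if i < j then a i j * h i * h j else 0)
        + ((if i < j then a i j * h j * x i else 0)
          + (if i < j then a i j * h i * x j else 0)) := by
    intro i j
    by_cases hij : i < j
    · simp only [if_pos hij, Pi.add_apply]; ring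
    · simp only [if_neg hij]; ring
  have h1 : qf a (x+h) = qf a x + qf a h
      + ((∑ i, ∑ j, if i < j then a i j * h j * x i else 0)
        + (∑ i, ∑ j, if i < j then a i j * h i * x j else 0)) := by
    rw [qf, qf, qf]
    rw [Finset.sum_congr rfl (fun i _ => Finset.sum_congr rfl (fun j _ => hsplit i j))]
    rw [Finset.sum_congr rfl (fun i _ => Finset.sum_add_distrib),
        Finset.sum_congr rfl (fun i _ => (rfl : _ = _))]
    rw [Finset.sum_add_distrib]
    rw [Finset.sum_congr rfl (fun i _ => Finset.sum_add_distrib), Finset.sum_add_distrib]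
    rw [Finset.sum_congr rfl (fun i (_ : i ∈ Finset.univ) => Finset.sum_add_distrib),
        Finset.sum_add_distrib]
  have hswap : (∑ i, ∑ j, if i < j then a i j * h i * x j else 0)
      = ∑ i, ∑ j, if j < i then a j i * h j * x i else 0 := Finset.sum_comm
  have hmerge : (∑ i, ∑ j, if i < j then a i j * h j * x i else 0)
      + (∑ i, ∑ j, if j < i then a j i * h j * x i else 0)
      = dotp (Mlin a h) x := by
    rw [← Finset.sum_add_distrib]
    rw [dotp]
    refine Finset.sum_congr rfl ?_
    intro i _
    rw [← Finset.sum_add_distrib, Mlin_apply, Finset.sum_mul]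
    refine Finset.sum_congr rfl ?_
    intro j _
    rcases lt_trichotomy i j with hij | hij | hij
    · rw [if_pos hij, if_neg (by omega : ¬ j < i), Amat, if_pos hij]; ring
    · rw [if_neg (by omega : ¬ i < j), if_neg (by omega : ¬ j < i), Amat,
        if_neg (by omega : ¬ i < j), if_neg (by omega : ¬ j < i)]; ring
    · rw [if_neg (by omega : ¬ i < j), if_pos hij, Amat, if_neg (by omega : ¬ i < j), if_pos hij]
      ring
  rw [h1, hswap, hmerge]

variable (p : (Fin n → ZMod 2) → ZMod 2)

lemma qf_zero : qf a 0 = 0 := by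
  simp [qf]

lemma lf_zero : lf b 0 = 0 := by simp [lf]

lemma deriv_p (hp : ∀ x, p x = qf a x + lf b x + c₀) (x h : Fin n → ZMod 2) :
    p (x+h) + p x = dotp (Mlin a h) x + (p h + p 0) := by
  rw [hp (x+h), hp x, hp h, hp 0, qf_expand, lf_add, qf_zero, lf_zero]
  linear_combination (z2 (qf a x)) + (z2 (lf b x))

lemma c_additive (hp : ∀ x, p x = qf a x + lf b x + c₀) (h h' : Fin n → ZMod 2)
    (hker : Mlin a h = 0) :
    p (h'+h) + p 0 = (p h + p 0) + (p h' + p 0) := by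
  have hd := deriv_p a b c₀ p hp h' h
  rw [hker, dotp_zero_left] at hd
  linear_combination hd - z2 (p h')

def eS (S : Finset (Fin n)) (x : Fin n → ZMod 2) : ZMod 2 := ∑ i ∈ S, x i

lemma eS_add (S : Finset (Fin n)) (x y : Fin n → ZMod 2) :
    eS S (x+y) = eS S x + eS S y := by
  simp [eS, Finset.sum_add_distrib]

lemma fcoeff_chi (S : Finset (Fin n)) :
    fCoeff (fun x => (-1:ℝ)^(p x).val) S
      = (1/2^n) * ∑ x : Fin n → ZMod 2, chi (p x + eS S x) := by
  rw [fCoeff]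
  congr 1
  refine Finset.sum_congr rfl ?_
  intro x _
  rw [chi_add]
  rfl

lemma Tsq (S : Finset (Fin n)) (hp : ∀ x, p x = qf a x + lf b x + c₀) :
    (∑ x : Fin n → ZMod 2, chi (p x + eS S x))^2
      = 2^n * ∑ h ∈ Finset.univ.filter (fun h => Mlin a h = 0),
          chi ((p h + p 0) + eS S h) := by
  have key : ∀ x h : Fin n → ZMod 2,
      chi (p x + eS S x) * chi (p (x+h) + eS S (x+h))
      = chi (dotp (Mlin a h) x) * chi ((p h + p 0) + eS S h) := by
    intro x h
    rw [← chi_add, ← chi_add]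
    congr 1
    have hd := deriv_p a b c₀ p hp x h
    rw [eS_add]
    linear_combination hd + z2 (eS S x)
  calc (∑ x : Fin n → ZMod 2, chi (p x + eS S x))^2
      = ∑ x : Fin n → ZMod 2, chi (p x + eS S x) * (∑ y : Fin n → ZMod 2, chi (p y + eS S y)) := by
        rw [pow_two, Finset.sum_mul]
    _ = ∑ x : Fin n → ZMod 2, ∑ h : Fin n → ZMod 2,
          chi (dotp (Mlin a h) x) * chi ((p h + p 0) + eS S h) := by
        refine Finset.sum_congr rfl ?_
        intro x _
        rw [sum_chi_shift (fun y => chi (p y + eS S y)) x, Finset.mul_sum]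
        exact Finset.sum_congr rfl (fun h _ => key x h)
    _ = ∑ h : Fin n → ZMod 2, chi ((p h + p 0) + eS S h)
          * (∑ x : Fin n → ZMod 2, chi (dotp (Mlin a h) x)) := by
        rw [Finset.sum_comm]
        refine Finset.sum_congr rfl ?_
        intro h _
        rw [Finset.mul_sum]
        refine Finset.sum_congr rfl ?_
        intro x _
        ring
    _ = ∑ h : Fin n → ZMod 2, (if Mlin a h = 0 then 2^n * chi ((p h + p 0) + eS S h) else 0) := by
        refine Finset.sum_congr rfl ?_
        intro h _
        by_cases hK : Mlin a h = 0
        · rw [if_pos hK, hK, sum_chi_dotp_zero]; ring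
        · rw [if_neg hK, sum_chi_dotp_ne _ hK]; ring
    _ = 2^n * ∑ h ∈ Finset.univ.filter (fun h => Mlin a h = 0),
          chi ((p h + p 0) + eS S h) := by
        rw [Finset.sum_filter, Finset.mul_sum]
        refine Finset.sum_congr rfl ?_
        intro h _
        by_cases hK : Mlin a h = 0
        · rw [if_pos hK, if_pos hK]
        · rw [if_neg hK, if_neg hK]; ring

lemma fCoeff_sq_eq (hp : ∀ x, p x = qf a x + lf b x + c₀) (S : Finset (Fin n)) :
    (fCoeff (fun x => (-1:ℝ)^(p x).val) S)^2
      = (1/2^n) * ∑ h ∈ Finset.univ.filter (fun h => Mlin a h = 0),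
          chi ((p h + p 0) + eS S h) := by
  rw [fcoeff_chi, mul_pow, Tsq a b c₀ p S hp]
  have h2 : ((2:ℝ)^n) ≠ 0 := by positivity
  field_simp

lemma fCoeff_vanish (hp : ∀ x, p x = qf a x + lf b x + c₀) (S : Finset (Fin n))
    (h₀ : Fin n → ZMod 2) (h₀K : Mlin a h₀ = 0)
    (hbad : (p h₀ + p 0) + eS S h₀ ≠ 0) :
    fCoeff (fun x => (-1:ℝ)^(p x).val) S = 0 := by
  have hzero : ∀ h₀' : Fin n → ZMod 2, h₀' + h₀' = 0 := by
    intro h₀'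
    funext i
    exact z2 _
  have hψ1 : (p h₀ + p 0) + eS S h₀ = 1 := by
    rcases zmod2_cases ((p h₀ + p 0) + eS S h₀) with h | h
    · exact absurd h hbad
    · exact h
  have hsum : ∑ h ∈ Finset.univ.filter (fun h => Mlin a h = 0),
      chi ((p h + p 0) + eS S h) = 0 := by
    refine Finset.sum_involution (fun h _ => h₀ + h) ?_ ?_ ?_ ?_
    · intro h hh
      have hhK : Mlin a h = 0 := by simpa using hh
      have hψ : (p (h₀+h) + p 0) + eS S (h₀+h)
          = ((p h₀ + p 0) + eS S h₀) + ((p h + p 0) + eS S h) := by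
        have hc := c_additive a b c₀ p hp h₀ h h₀K
        rw [eS_add, add_comm h₀ h]
        linear_combination hc
      have hneg : chi ((p (h₀+h) + p 0) + eS S (h₀+h)) = - chi ((p h + p 0) + eS S h) := by
        rw [hψ, chi_add, hψ1, chi_one]
        ring
      show chi ((p h + p 0) + eS S h) + chi ((p (h₀+h) + p 0) + eS S (h₀+h)) = 0
      rw [hneg]
      ring
    · intro h hh hne
      show h₀ + h ≠ h
      intro hEq
      have hh0 : h₀ = 0 := by
        have h1 : h₀ + h = 0 + h := by rw [hEq, zero_add]
        exact add_right_cancel h1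
      rw [hh0] at hbad
      apply hbad
      have e1 : p 0 + p 0 = 0 := z2 _
      have e2 : eS S (0 : Fin n → ZMod 2) = 0 := by simp [eS]
      rw [e1, e2, add_zero]
    · intro h hh
      show h₀ + h ∈ Finset.univ.filter (fun h => Mlin a h = 0)
      simp only [Finset.mem_filter, Finset.mem_univ, true_and] at hh ⊢
      rw [map_add, h₀K, hh, add_zero]
    · intro h hh
      show h₀ + (h₀ + h) = h
      rw [← add_assoc, hzero h₀, zero_add]
  have hsq := fCoeff_sq_eq a b c₀ p hp S
  rw [hsum, mul_zero] at hsq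
  exact pow_eq_zero_iff two_ne_zero |>.mp hsq

lemma fCoeff_sq_le (hp : ∀ x, p x = qf a x + lf b x + c₀) (S : Finset (Fin n)) :
    (fCoeff (fun x => (-1:ℝ)^(p x).val) S)^2
      ≤ (1/2^n) * ((Finset.univ.filter (fun h => Mlin a h = 0)).card : ℝ) := by
  rw [fCoeff_sq_eq a b c₀ p hp S]
  refine mul_le_mul_of_nonneg_left ?_ (by positivity)
  calc ∑ h ∈ Finset.univ.filter (fun h => Mlin a h = 0), chi ((p h + p 0) + eS S h)
      ≤ |∑ h ∈ Finset.univ.filter (fun h => Mlin a h = 0), chi ((p h + p 0) + eS S h)| :=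
        le_abs_self _
    _ ≤ ∑ h ∈ Finset.univ.filter (fun h => Mlin a h = 0), |chi ((p h + p 0) + eS S h)| :=
        Finset.abs_sum_le_sum_abs _ _
    _ = ∑ h ∈ Finset.univ.filter (fun h => Mlin a h = 0), (1:ℝ) :=
        Finset.sum_congr rfl (fun h _ => abs_chi _)
    _ = ((Finset.univ.filter (fun h => Mlin a h = 0)).card : ℝ) := by simp

end quad

section linalg
variable {n : ℕ}

lemma proj_exists (W : Submodule (ZMod 2) (Fin n → ZMod 2)) :
    ∃ P : Finset (Fin n), P.card ≤ Module.finrank (ZMod 2) W ∧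
      ∀ w ∈ W, (∀ i ∈ P, w i = 0) → w = 0 := by
  generalize hr : Module.finrank (ZMod 2) W = r
  induction r using Nat.strong_induction_on generalizing W with
  | _ r ih =>
    rcases eq_or_ne W ⊥ with rfl | hW
    · refine ⟨∅, by simp, ?_⟩
      intro w hw _
      simpa using hw
    · obtain ⟨w₀, hw₀W, hw₀⟩ := (Submodule.ne_bot_iff W).mp hW
      have hex : ∃ i₀, w₀ i₀ ≠ 0 := by
        by_contra hcon
        push_neg at hcon
        exact hw₀ (funext hcon)
      obtain ⟨i₀, hi₀⟩ := hex
      set ev : (Fin n → ZMod 2) →ₗ[ZMod 2] ZMod 2 := LinearMap.proj i₀ with hev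
      have hlt : W ⊓ LinearMap.ker ev < W := by
        refine lt_of_le_of_ne inf_le_left ?_
        intro hEq
        have hmem : w₀ ∈ W ⊓ LinearMap.ker ev := hEq.symm ▸ hw₀W
        exact hi₀ hmem.2
      have hr' : Module.finrank (ZMod 2) ↥(W ⊓ LinearMap.ker ev) < r := by
        rw [← hr]
        exact Submodule.finrank_lt_finrank_of_lt hlt
      obtain ⟨P', hP'c, hP'⟩ := ih _ hr' (W ⊓ LinearMap.ker ev) rfl
      refine ⟨insert i₀ P', ?_, ?_⟩
      · calc (insert i₀ P').card ≤ P'.card + 1 := Finset.card_insert_le _ _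
          _ ≤ r := by omega
      · intro w hwW hz
        have hwW' : w ∈ W ⊓ LinearMap.ker ev := by
          refine ⟨hwW, ?_⟩
          exact hz i₀ (Finset.mem_insert_self _ _)
        exact hP' w hwW' (fun i hi => hz i (Finset.mem_insert_of_mem hi))

noncomputable def dotL : (Fin n → ZMod 2) →ₗ[ZMod 2] ((Fin n → ZMod 2) →ₗ[ZMod 2] ZMod 2) := by
  refine LinearMap.mk₂ (ZMod 2) dotp dotp_add_left ?_ dotp_add_right ?_
  · intro r u v
    simp [dotp, smul_eq_mul, Finset.mul_sum, mul_assoc]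
  · intro r u v
    simp only [dotp, smul_eq_mul, Finset.mul_sum]
    refine Finset.sum_congr rfl ?_
    intro i _
    simp [smul_eq_mul]
    ring

lemma perp_exists (K : Submodule (ZMod 2) (Fin n → ZMod 2)) :
    ∃ W : Submodule (ZMod 2) (Fin n → ZMod 2),
      (∀ v, (v ∈ W ↔ ∀ h ∈ K, dotp v h = 0)) ∧
      Module.finrank (ZMod 2) W + Module.finrank (ZMod 2) K = n := by
  set Φ := (Submodule.dualRestrict K).comp dotL with hΦ
  refine ⟨LinearMap.ker Φ, ?_, ?_⟩
  · intro v
    constructor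
    · intro hv h hh
      have h0 := LinearMap.mem_ker.mp hv
      have h1 := congrArg (fun (ψ : Module.Dual (ZMod 2) K) => ψ ⟨h, hh⟩) h0
      simpa [hΦ, Submodule.dualRestrict_apply, dotL] using h1
    · intro hv
      apply LinearMap.mem_ker.mpr
      apply LinearMap.ext
      rintro ⟨h, hh⟩
      simpa [hΦ, Submodule.dualRestrict_apply, dotL] using hv h hh
  · have h2 : Function.Surjective (dotL (n := n)) := by
      intro ψf
      refine ⟨fun i => ψf (fun j => if i = j then 1 else 0), ?_⟩
      apply LinearMap.ext
      intro w
      conv_rhs => rw [pi_eq_sum_univ w]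
      rw [map_sum]
      show dotp _ w = _
      rw [dotp]
      refine Finset.sum_congr rfl ?_
      intro i _
      rw [map_smul]
      simp [smul_eq_mul, mul_comm]
    have hsurj : Function.Surjective Φ := by
      rw [hΦ]
      exact (Subspace.dualRestrict_surjective).comp h2
    have hrank := LinearMap.finrank_range_add_finrank_ker Φ
    rw [LinearMap.range_eq_top.mpr hsurj, finrank_top, Subspace.dual_finrank_eq,
      Module.finrank_fin_fun] at hrank
    omega

end linalg

lemma ker_card {n : ℕ} (a : Fin n → Fin n → ZMod 2) :
    (Finset.univ.filter (fun h => Mlin a h = 0)).card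
      = 2 ^ (Module.finrank (ZMod 2) ↥(LinearMap.ker (Mlin a))) := by
  classical
  have e : {h : Fin n → ZMod 2 // Mlin a h = 0} ≃ ↥(LinearMap.ker (Mlin a)) :=
    Equiv.subtypeEquivRight (fun h => (LinearMap.mem_ker (f := Mlin a)).symm)
  rw [← Fintype.card_subtype, Fintype.card_congr e]
  have h := Module.card_eq_pow_finrank (K := ZMod 2) (V := ↥(LinearMap.ker (Mlin a)))
  rwa [ZMod.card] at h

def indS {n : ℕ} (S : Finset (Fin n)) : Fin n → ZMod 2 := fun i => if i ∈ S then 1 else 0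

lemma eS_eq_dotp {n : ℕ} (S : Finset (Fin n)) (h : Fin n → ZMod 2) :
    eS S h = dotp (indS S) h := by
  classical
  rw [eS, dotp]
  rw [show (∑ i, indS S i * h i) = ∑ i, (if i ∈ S then h i else 0) from
    Finset.sum_congr rfl (fun i _ => by by_cases hi : i ∈ S <;> simp [indS, hi])]
  rw [Finset.sum_ite_mem, Finset.univ_inter]



/-- There is an absolute constant `C > 0` such that for every degree `≤ 2` polynomial
`p : 𝔽₂ⁿ → 𝔽₂` and every `k ≥ 1`, the `k`-th Fourier weight of `(-1)^{p(x)}` is at most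
`C k^{-1/2} (1 + √2)^k`. -/
theorem fourier_weight_deg_two_sharp :
    ∃ C : ℝ, 0 < C ∧ ∀ (n : ℕ), 1 ≤ n → ∀ (p : (Fin n → ZMod 2) → ZMod 2), IsDegreeLE2 p →
      ∀ k : ℕ, 1 ≤ k →
        ∑ A ∈ Finset.powersetCard k (Finset.univ : Finset (Fin n)),
            |fCoeff (fun x => (-1 : ℝ) ^ (p x).val) A|
          ≤ C * (k : ℝ) ^ (-(1 : ℝ) / 2) * (1 + Real.sqrt 2) ^ k := by
  classical
  refine ⟨100, by norm_num, ?_⟩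
  intro n hn p hdeg k hk
  obtain ⟨a, b, c₀, hp⟩ := hdeg
  have hp' : ∀ x, p x = qf a x + lf b x + c₀ := hp
  set f : (Fin n → ZMod 2) → ℝ := fun x => (-1:ℝ)^(p x).val with hf
  obtain ⟨W, hWmem, hWrank⟩ := perp_exists (LinearMap.ker (Mlin a))
  set d := Module.finrank (ZMod 2) W with hd
  obtain ⟨P, hPcard, hPinj⟩ := proj_exists W
  have hdn : d ≤ n := by omega
  -- single-coefficient bound
  have hfb : ∀ S : Finset (Fin n), |fCoeff f S| ≤ (s2⁻¹)^d := by
    intro S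
    have hsq := fCoeff_sq_le a b c₀ p hp' S
    have hcard := ker_card a
    have hrk : Module.finrank (ZMod 2) ↥(LinearMap.ker (Mlin a)) = n - d := by omega
    rw [hcard, hrk] at hsq
    have hsml : ((s2⁻¹)^d)^2 = (2⁻¹:ℝ)^d := by
      rw [← pow_mul, show d*2 = 2*d by ring, pow_mul, inv_pow, s2_sq]
    have hval : (1/2^n : ℝ) * ((2^(n-d) : ℕ) : ℝ) = ((s2⁻¹)^d)^2 := by
      rw [hsml]
      push_cast
      have h2n : (2:ℝ)^n = 2^(n-d) * 2^d := by rw [← pow_add]; congr 1; omega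
      rw [h2n, inv_pow]
      have hne1 : ((2:ℝ)^(n-d)) ≠ 0 := by positivity
      have hne2 : ((2:ℝ)^d) ≠ 0 := by positivity
      field_simp
    refine le_of_pow_le_pow_left₀ two_ne_zero (pow_nonneg (inv_nonneg.2 (le_of_lt s2_pos)) d) ?_
    rw [sq_abs]
    calc (fCoeff f S)^2 ≤ (1/2^n : ℝ) * ((2^(n-d) : ℕ) : ℝ) := hsq
      _ = ((s2⁻¹)^d)^2 := hval
  -- good sets
  have hgood : ∀ S : Finset (Fin n), fCoeff f S ≠ 0 →
      ∀ h, Mlin a h = 0 → eS S h = p h + p 0 := by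
    intro S hS h hh
    by_contra hbad
    apply hS
    refine fCoeff_vanish a b c₀ p hp' S h hh ?_
    intro h0
    apply hbad
    linear_combination h0 - z2 (p h + p 0)
  set 𝒮 := (Finset.powersetCard k (Finset.univ : Finset (Fin n))).filter
    (fun S => fCoeff f S ≠ 0) with hSc
  have hinj : Set.InjOn (fun S => S ∩ P) ↑𝒮 := by
    intro S₁ hS₁ S₂ hS₂ hF
    simp only [hSc, Finset.coe_filter, Set.mem_setOf_eq] at hS₁ hS₂
    have hF' : S₁ ∩ P = S₂ ∩ P := hF
    have hwW : indS S₁ + indS S₂ ∈ W := by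
      rw [hWmem]
      intro h hh
      have hh' : Mlin a h = 0 := LinearMap.mem_ker.mp hh
      rw [dotp_add_left, ← eS_eq_dotp, ← eS_eq_dotp,
        hgood S₁ hS₁.2 h hh', hgood S₂ hS₂.2 h hh']
      exact z2 _
    have hwP : ∀ i ∈ P, (indS S₁ + indS S₂) i = 0 := by
      intro i hi
      have hmem : i ∈ S₁ ↔ i ∈ S₂ := by
        constructor
        · intro h1
          exact (Finset.mem_inter.mp (hF' ▸ (Finset.mem_inter.mpr ⟨h1, hi⟩))).1
        · intro h2
          exact (Finset.mem_inter.mp (hF'.symm ▸ (Finset.mem_inter.mpr ⟨h2, hi⟩))).1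
      by_cases h1 : i ∈ S₁
      · have h2 : i ∈ S₂ := hmem.mp h1
        show indS S₁ i + indS S₂ i = 0
        simp only [indS, if_pos h1, if_pos h2]
        decide
      · have h2 : i ∉ S₂ := fun hc => h1 (hmem.mpr hc)
        show indS S₁ i + indS S₂ i = 0
        simp only [indS, if_neg h1, if_neg h2]
        decide
    have hw0 : indS S₁ + indS S₂ = 0 := hPinj _ hwW hwP
    ext i
    have hpt : indS S₁ i + indS S₂ i = 0 := congrFun hw0 i
    constructor
    · intro h1
      by_contra h2
      simp only [indS, if_pos h1, if_neg h2] at hpt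
      exact absurd hpt (by decide)
    · intro h2
      by_contra h1
      simp only [indS, if_neg h1, if_pos h2] at hpt
      exact absurd hpt (by decide)
  have hmaps : ∀ S ∈ 𝒮, S ∩ P ∈ (Finset.range (k+1)).biUnion
      (fun j => Finset.powersetCard j P) := by
    intro S hS
    simp only [hSc, Finset.mem_filter, Finset.mem_powersetCard] at hS
    rw [Finset.mem_biUnion]
    refine ⟨(S ∩ P).card, ?_, ?_⟩
    · rw [Finset.mem_range]
      have h1 : (S ∩ P).card ≤ S.card := Finset.card_le_card Finset.inter_subset_left
      have h2 : S.card = k := hS.1.2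
      omega
    · rw [Finset.mem_powersetCard]
      exact ⟨Finset.inter_subset_right, rfl⟩
  have hScard : 𝒮.card ≤ ∑ j ∈ Finset.range (k+1), Nat.choose d j := by
    calc 𝒮.card ≤ ((Finset.range (k+1)).biUnion (fun j => Finset.powersetCard j P)).card :=
          Finset.card_le_card_of_injOn _ hmaps hinj
      _ ≤ ∑ j ∈ Finset.range (k+1), (Finset.powersetCard j P).card := Finset.card_biUnion_le
      _ = ∑ j ∈ Finset.range (k+1), Nat.choose P.card j :=
          Finset.sum_congr rfl (fun j _ => Finset.card_powersetCard j P)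
      _ ≤ ∑ j ∈ Finset.range (k+1), Nat.choose d j :=
          Finset.sum_le_sum (fun j _ => Nat.choose_le_choose j hPcard)
  -- assemble
  have hsplit : ∑ A ∈ Finset.powersetCard k (Finset.univ : Finset (Fin n)), |fCoeff f A|
      = ∑ A ∈ 𝒮, |fCoeff f A| := by
    rw [hSc]
    refine (Finset.sum_filter_of_ne ?_).symm
    intro S _ hne h0
    exact hne (by rw [h0, abs_zero])
  have hsum1 : ∑ A ∈ 𝒮, |fCoeff f A| ≤ (𝒮.card : ℝ) * (s2⁻¹)^d := by
    calc ∑ A ∈ 𝒮, |fCoeff f A| ≤ ∑ _A ∈ 𝒮, (s2⁻¹)^d := Finset.sum_le_sum (fun S _ => hfb S)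
      _ = (𝒮.card : ℝ) * (s2⁻¹)^d := by rw [Finset.sum_const, nsmul_eq_mul]
  have hkb := keybound d k hk
  have hsqp : (0:ℝ) < Real.sqrt k := Real.sqrt_pos.2 (by exact_mod_cast hk)
  have hZ : (∑ A ∈ Finset.powersetCard k (Finset.univ : Finset (Fin n)), |fCoeff f A|)
      * Real.sqrt k ≤ 100 * (1+s2)^k := by
    rw [hsplit]
    have hcast : (𝒮.card : ℝ) ≤ ∑ j ∈ Finset.range (k+1), ((d.choose j : ℕ) : ℝ) := by
      exact_mod_cast hScard
    calc (∑ A ∈ 𝒮, |fCoeff f A|) * Real.sqrt k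
        ≤ ((𝒮.card : ℝ) * (s2⁻¹)^d) * Real.sqrt k :=
          mul_le_mul_of_nonneg_right hsum1 (Real.sqrt_nonneg _)
      _ ≤ ((∑ j ∈ Finset.range (k+1), ((d.choose j : ℕ) : ℝ)) * (s2⁻¹)^d) * Real.sqrt k := by
          refine mul_le_mul_of_nonneg_right
            (mul_le_mul_of_nonneg_right hcast
              (pow_nonneg (inv_nonneg.2 (le_of_lt s2_pos)) d)) (Real.sqrt_nonneg _)
      _ = ((∑ j ∈ Finset.range (k+1), ((d.choose j : ℕ) : ℝ)) * Real.sqrt k) * (s2⁻¹)^d := by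
          ring
      _ ≤ (100 * s2^d * (1+s2)^k) * (s2⁻¹)^d :=
          mul_le_mul_of_nonneg_right hkb (pow_nonneg (inv_nonneg.2 (le_of_lt s2_pos)) d)
      _ = 100 * (1+s2)^k * (s2 * s2⁻¹)^d := by rw [mul_pow]; ring
      _ = 100 * (1+s2)^k := by
          rw [mul_inv_cancel₀ (ne_of_gt s2_pos), one_pow, mul_one]
  have hrpow : (k:ℝ) ^ (-(1:ℝ)/2) = (Real.sqrt k)⁻¹ := by
    rw [show (-(1:ℝ)/2) = -(1/2) by norm_num, Real.rpow_neg (Nat.cast_nonneg k),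
      ← Real.sqrt_eq_rpow]
  rw [hrpow]
  have hre : (100:ℝ) * (Real.sqrt k)⁻¹ * (1 + Real.sqrt 2)^k
      = (100 * (1+s2)^k) / Real.sqrt k := by
    show (100:ℝ) * (Real.sqrt k)⁻¹ * (1 + Real.sqrt 2)^k = (100 * (1+Real.sqrt 2)^k) / Real.sqrt k
    field_simp
  rw [hre, le_div_iff₀ hsqp]
  exact hZ
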